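/- Reindexing identity: for any natural number m ≥ 1 and any function g : ℤ → ℝ, one has ∑_{j=1}^m γ_{m,j} ∑_{i=0}^{j−1} g(2i − j + 1) = ∑_{β = 1−m}^{m−1} τ_{m,1+|β|} g(β), where γ_{m,j} := (-1)^{j-1}(2/j)C(2m,m+j)/C(2m,m) and τ_{m,j} := ∑_{β≥0: j+2β ≤ m} γ_{m,j+2β}. -/

import Mathlib

noncomputable def gam (m j : ℕ) : ℝ :=
  (-1) ^ (j - 1) * (2 / j) * (Nat.choose (2 * m) (m + j)) / (Nat.choose (2 * m) m)

noncomputable def tau (m j : ℕ) : ℝ :=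
  ∑ β ∈ Finset.range (m + 1), if j + 2 * β ≤ m then gam m (j + 2 * β) else 0

private lemma sig_eq {α : Type*} {a b : α} {x y : ℕ} (h1 : a = b) (h2 : x = y) :
    (⟨a, x⟩ : Σ _ : α, ℕ) = ⟨b, y⟩ := by subst h1; subst h2; rfl

theorem stmt11 (m : ℕ) (hm : 1 ≤ m) (g : ℤ → ℝ) :
    ∑ j ∈ Finset.Icc 1 m, gam m j *
        ∑ i ∈ Finset.range j, g (2 * (i : ℤ) - (j : ℤ) + 1) =
      ∑ β ∈ Finset.Icc (1 - (m : ℤ)) ((m : ℤ) - 1), tau m (1 + β.natAbs) * g β := by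
  have hRHS : ∑ β ∈ Finset.Icc (1 - (m : ℤ)) ((m : ℤ) - 1), tau m (1 + β.natAbs) * g β
      = ∑ p ∈ ((Finset.Icc (1 - (m : ℤ)) ((m : ℤ) - 1)).sigma
          (fun _ => Finset.range (m + 1))).filter
          (fun p => 1 + p.1.natAbs + 2 * p.2 ≤ m),
        gam m (1 + p.1.natAbs + 2 * p.2) * g p.1 := by
    rw [Finset.sum_filter, Finset.sum_sigma]
    refine Finset.sum_congr rfl fun β hβ => ?_
    rw [tau, Finset.sum_mul]
    refine Finset.sum_congr rfl fun b hb => ?_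
    by_cases h : 1 + β.natAbs + 2 * b ≤ m <;> simp [h]
  have hLHS : ∑ j ∈ Finset.Icc 1 m, gam m j *
        ∑ i ∈ Finset.range j, g (2 * (i : ℤ) - (j : ℤ) + 1)
      = ∑ p ∈ (Finset.Icc 1 m).sigma (fun j => Finset.range j),
        gam m p.1 * g (2 * (p.2 : ℤ) - (p.1 : ℤ) + 1) := by
    rw [Finset.sum_sigma]
    exact Finset.sum_congr rfl fun j _ => Finset.mul_sum ..
  rw [hLHS, hRHS]
  refine Finset.sum_bij'
    (fun p _ => (⟨2 * (p.2 : ℤ) - (p.1 : ℤ) + 1,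
        if p.1 ≤ 2 * p.2 + 1 then p.1 - p.2 - 1 else p.2⟩ :
        (_ : ℤ) × ℕ))
    (fun q _ => (⟨1 + q.1.natAbs + 2 * q.2,
        if 0 ≤ q.1 then q.1.natAbs + q.2 else q.2⟩ : (_ : ℕ) × ℕ))
    ?_ ?_ ?_ ?_ ?_
  · rintro ⟨j, i⟩ hp
    simp only [Finset.mem_sigma, Finset.mem_Icc, Finset.mem_range] at hp
    obtain ⟨⟨hj1, hjm⟩, hij⟩ := hp
    simp only [Finset.mem_filter, Finset.mem_sigma, Finset.mem_Icc, Finset.mem_range]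
    by_cases h : j ≤ 2 * i + 1
    · have hβ : (2 * (i : ℤ) - (j : ℤ) + 1).natAbs = 2 * i + 1 - j := by omega
      simp only [if_pos h, hβ]
      refine ⟨⟨⟨by omega, by omega⟩, by omega⟩, by omega⟩
    · have hβ : (2 * (i : ℤ) - (j : ℤ) + 1).natAbs = j - (2 * i + 1) := by omega
      simp only [if_neg h, hβ]
      refine ⟨⟨⟨by omega, by omega⟩, by omega⟩, by omega⟩
  · rintro ⟨β, b⟩ hq
    simp only [Finset.mem_filter, Finset.mem_sigma, Finset.mem_Icc, Finset.mem_range] at hq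
    obtain ⟨⟨⟨hβ1, hβ2⟩, hb⟩, hle⟩ := hq
    simp only [Finset.mem_sigma, Finset.mem_Icc, Finset.mem_range]
    by_cases h : 0 ≤ β
    · simp only [if_pos h]; exact ⟨⟨by omega, hle⟩, by omega⟩
    · simp only [if_neg h]; exact ⟨⟨by omega, hle⟩, by omega⟩
  · rintro ⟨j, i⟩ hp
    simp only [Finset.mem_sigma, Finset.mem_Icc, Finset.mem_range] at hp
    obtain ⟨⟨hj1, hjm⟩, hij⟩ := hp
    by_cases h : j ≤ 2 * i + 1
    · have hβ : (2 * (i : ℤ) - (j : ℤ) + 1).natAbs = 2 * i + 1 - j := by omega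
      have h0 : (0:ℤ) ≤ 2 * (i : ℤ) - (j : ℤ) + 1 := by omega
      simp only [if_pos h, hβ, if_pos h0]
      exact sig_eq (by omega) (by omega)
    · have hβ : (2 * (i : ℤ) - (j : ℤ) + 1).natAbs = j - (2 * i + 1) := by omega
      have h0 : ¬ (0:ℤ) ≤ 2 * (i : ℤ) - (j : ℤ) + 1 := by omega
      simp only [if_neg h, hβ, if_neg h0]
      exact sig_eq (by omega) rfl
  · rintro ⟨β, b⟩ hq
    simp only [Finset.mem_filter, Finset.mem_sigma, Finset.mem_Icc, Finset.mem_range] at hq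
    obtain ⟨⟨⟨hβ1, hβ2⟩, hb⟩, hle⟩ := hq
    by_cases h : 0 ≤ β
    · have hc : 1 + β.natAbs + 2 * b ≤ 2 * (β.natAbs + b) + 1 := by omega
      simp only [if_pos h, if_pos hc]
      exact sig_eq (by omega) (by omega)
    · have hc : ¬ (1 + β.natAbs + 2 * b ≤ 2 * b + 1) := by
        have : 1 ≤ β.natAbs := by omega
        omega
      simp only [if_neg h, if_neg hc]
      exact sig_eq (by omega) (by omega)
  · rintro ⟨j, i⟩ hp
    simp only [Finset.mem_sigma, Finset.mem_Icc, Finset.mem_range] at hp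
    obtain ⟨⟨hj1, hjm⟩, hij⟩ := hp
    by_cases h : j ≤ 2 * i + 1
    · have hβ : (2 * (i : ℤ) - (j : ℤ) + 1).natAbs = 2 * i + 1 - j := by omega
      simp only [hβ, if_pos h]
      congr 2
      omega
    · have hβ : (2 * (i : ℤ) - (j : ℤ) + 1).natAbs = j - (2 * i + 1) := by omega
      simp only [hβ, if_neg h]
      congr 2
      omega
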